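/- For η ∈ ℂ with η ∉ {−2, −4, −6}, define f_η : ℝ² → ℂ by f_η(θ₁, θ₂) = (a(η) + b(η)cos θ₁ + b(η)cos θ₂ + c(η)cos θ₁ cos θ₂)·(4 + η − 2cos θ₁ − 2cos θ₂). There exists a constant C > 0 such that for every η ∈ ℂ with |η| ≤ 1 and every θ in the high-frequency set T^H, |1 − (24/25)·f_η(θ)| ≤ 7/25 + C·|η|. In particular, if the complex shift satisfies λ = O(1/h) (so that η = λh² = O(h)), the local Fourier analysis smoothing factor of the Vanka relaxation with ω = 24/25 for the complex-shifted Laplacian is at most 7/25 + O(h). -/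

import Mathlib

open Real

noncomputable def aη (η : ℂ) : ℂ := (1/4) * (1/(2+η) + 2/(4+η) + 1/(6+η))
noncomputable def bη (η : ℂ) : ℂ := (1/4) * (1/(2+η) - 1/(6+η))
noncomputable def cη (η : ℂ) : ℂ := (1/4) * (1/(2+η) - 2/(4+η) + 1/(6+η))

/-- The high-frequency set `T^H = [−π/2, 3π/2)² \ [−π/2, π/2)²`. -/
def TH : Set (ℝ × ℝ) :=
  (Set.Ico (-(π/2)) (3*π/2) ×ˢ Set.Ico (-(π/2)) (3*π/2)) \
    (Set.Ico (-(π/2)) (π/2) ×ˢ Set.Ico (-(π/2)) (π/2))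

/-- The (scaled) symbol of the Vanka relaxation product `M̃_η L̃_η` with shift `η = λh²`. -/
noncomputable def fη (η : ℂ) (θ : ℝ × ℝ) : ℂ :=
  (aη η + bη η * Real.cos θ.1 + bη η * Real.cos θ.2
    + cη η * (Real.cos θ.1 * Real.cos θ.2)) *
    (4 + η - 2 * Real.cos θ.1 - 2 * Real.cos θ.2)

private lemma habs3 (a b c : ℂ) :
    ‖(a + b + c)‖ ≤ ‖a‖ + ‖b‖ + ‖c‖ := by
  calc ‖(a + b + c)‖ ≤ ‖(a + b)‖ + ‖c‖ :=
        norm_add_le _ _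
    _ ≤ ‖a‖ + ‖b‖ + ‖c‖ := by
        linarith [norm_add_le a b]

private lemma habs4 (a b c d : ℂ) :
    ‖(a + b + c + d)‖ ≤
      ‖a‖ + ‖b‖ + ‖c‖ + ‖d‖ := by
  calc ‖(a + b + c + d)‖ ≤ ‖(a + b + c)‖ + ‖d‖ :=
        norm_add_le _ _
    _ ≤ _ := by linarith [habs3 a b c]

set_option maxHeartbeats 1000000 in
theorem stmt_10 :
    ∃ C > 0, ∀ η : ℂ, ‖η‖ ≤ 1 → ∀ θ ∈ TH,
      ‖1 - (24/25 : ℂ) * fη η θ‖ ≤ 7/25 + C * ‖η‖ := by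
  refine ⟨9, by norm_num, ?_⟩
  intro η hη θ hθ
  -- unpack membership in the high-frequency set
  have hθ' : (-(π/2) ≤ θ.1 ∧ θ.1 < 3*π/2) ∧ (-(π/2) ≤ θ.2 ∧ θ.2 < 3*π/2) := by
    have := hθ.1; simpa [Set.mem_prod, Set.mem_Ico] using this
  have hθ'' : ¬((-(π/2) ≤ θ.1 ∧ θ.1 < π/2) ∧ (-(π/2) ≤ θ.2 ∧ θ.2 < π/2)) := by
    have := hθ.2; simpa [Set.mem_prod, Set.mem_Ico] using this
  set x := Real.cos θ.1 with hxdef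
  set y := Real.cos θ.2 with hydef
  have hx : -1 ≤ x := Real.neg_one_le_cos θ.1
  have hx1 : x ≤ 1 := Real.cos_le_one θ.1
  have hy : -1 ≤ y := Real.neg_one_le_cos θ.2
  have hy1 : y ≤ 1 := Real.cos_le_one θ.2
  have hxy : x ≤ 0 ∨ y ≤ 0 := by
    rcases lt_or_ge θ.1 (π/2) with h | h
    · right
      rcases lt_or_ge θ.2 (π/2) with h' | h'
      · exact absurd ⟨⟨hθ'.1.1, h⟩, ⟨hθ'.2.1, h'⟩⟩ hθ''
      · exact Real.cos_nonpos_of_pi_div_two_le_of_le h' (by linarith [hθ'.2.2])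
    · left; exact Real.cos_nonpos_of_pi_div_two_le_of_le h (by linarith [hθ'.1.2])
  -- polynomial bounds for the unshifted symbol
  have hg1 : 18 ≤ (7+2*x+2*y+x*y)*(4-2*x-2*y) := by
    rcases hxy with h | h <;>
    nlinarith [sq_nonneg (x+y), sq_nonneg (x-y), sq_nonneg (x+1), sq_nonneg (y+1),
      sq_nonneg (x-1), sq_nonneg (y-1),
      mul_nonneg (sub_nonneg.2 hx1) (sub_nonneg.2 hy1)]
  have hg2 : (7+2*x+2*y+x*y)*(4-2*x-2*y) ≤ 32 := by
    nlinarith [sq_nonneg (x+y), sq_nonneg (x-y), sq_nonneg (x+1), sq_nonneg (y+1),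
      mul_nonneg (by linarith : (0:ℝ) ≤ x+1) (by linarith : (0:ℝ) ≤ y+1)]
  -- the η = 0 part has modulus at most 7/25
  have hmain0 : (1:ℂ) - (24/25) * fη 0 θ
      = (((25 - (7+2*x+2*y+x*y)*(4-2*x-2*y))/25 : ℝ) : ℂ) := by
    simp only [fη, aη, bη, cη, ← hxdef, ← hydef]
    push_cast
    ring
  have habs0 : ‖((1:ℂ) - (24/25) * fη 0 θ)‖ ≤ 7/25 := by
    rw [hmain0, Complex.norm_real, Real.norm_eq_abs, abs_le]
    constructor <;> linarith
  -- lower bounds on the denominators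
  have hb : ∀ c : ℂ, 2 ≤ ‖c‖ → 1 ≤ ‖(c + η)‖ := by
    intro c hc
    have h2 := norm_add_le (c + η) (-η)
    simp only [add_neg_cancel_right, norm_neg] at h2
    linarith
  have h2a : 1 ≤ ‖(2 + η)‖ := hb 2 (by norm_num [Complex.norm_ofNat])
  have h4a : 1 ≤ ‖(4 + η)‖ := hb 4 (by norm_num [Complex.norm_ofNat])
  have h6a : 1 ≤ ‖(6 + η)‖ := hb 6 (by norm_num [Complex.norm_ofNat])
  have h2ne : (2 + η) ≠ 0 := fun h => by rw [h, norm_zero] at h2a; norm_num at h2a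
  have h4ne : (4 + η) ≠ 0 := fun h => by rw [h, norm_zero] at h4a; norm_num at h4a
  have h6ne : (6 + η) ≠ 0 := fun h => by rw [h, norm_zero] at h6a; norm_num at h6a
  have m2 : (2 + η) * (1/(2 + η)) = 1 := mul_one_div_cancel h2ne
  have m4 : (4 + η) * (1/(4 + η)) = 1 := mul_one_div_cancel h4ne
  have m6 : (6 + η) * (1/(6 + η)) = 1 := mul_one_div_cancel h6ne
  -- generic bound for coefficient combinations
  have hbound : ∀ c2 c4 c6 : ℂ,
      ‖(c2 * (1/(2+η)) + c4 * (1/(4+η)) + c6 * (1/(6+η)))‖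
        ≤ ‖c2‖ + ‖c4‖ + ‖c6‖ := by
    intro c2 c4 c6
    have e2 : ‖(1/(2+η))‖ ≤ 1 := by
      rw [norm_div, norm_one]; exact div_le_one_of_le₀ h2a (by positivity)
    have e4 : ‖(1/(4+η))‖ ≤ 1 := by
      rw [norm_div, norm_one]; exact div_le_one_of_le₀ h4a (by positivity)
    have e6 : ‖(1/(6+η))‖ ≤ 1 := by
      rw [norm_div, norm_one]; exact div_le_one_of_le₀ h6a (by positivity)
    calc ‖(c2 * (1/(2+η)) + c4 * (1/(4+η)) + c6 * (1/(6+η)))‖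
        ≤ ‖(c2 * (1/(2+η)))‖ + ‖(c4 * (1/(4+η)))‖
            + ‖(c6 * (1/(6+η)))‖ := habs3 _ _ _
      _ ≤ ‖c2‖ + ‖c4‖ + ‖c6‖ := by
          simp only [norm_mul]
          have t2 := mul_le_of_le_one_right (norm_nonneg c2) e2
          have t4 := mul_le_of_le_one_right (norm_nonneg c4) e4
          have t6 := mul_le_of_le_one_right (norm_nonneg c6) e6
          linarith
  -- the coefficient differences
  have hΔa : aη η - aη 0
      = η * ((-(1/8)) * (1/(2+η)) + (-(1/8)) * (1/(4+η)) + (-(1/24)) * (1/(6+η))) := by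
    simp only [aη]
    linear_combination (1/8) * m2 + (1/8) * m4 + (1/24) * m6
  have hΔb : bη η - bη 0
      = η * ((-(1/8)) * (1/(2+η)) + (0:ℂ) * (1/(4+η)) + (1/24) * (1/(6+η))) := by
    simp only [bη]
    linear_combination (1/8) * m2 - (1/24) * m6
  have hΔc : cη η - cη 0
      = η * ((-(1/8)) * (1/(2+η)) + (1/8) * (1/(4+η)) + (-(1/24)) * (1/(6+η))) := by
    simp only [cη]
    linear_combination (1/8) * m2 - (1/8) * m4 + (1/24) * m6
  have ha18 : ‖((-(1/8)):ℂ)‖ = 1/8 := by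
    simp [norm_neg, norm_div, Complex.norm_ofNat]
  have hp18 : ‖((1/8):ℂ)‖ = 1/8 := by
    simp [norm_div, Complex.norm_ofNat]
  have ha24 : ‖((-(1/24)):ℂ)‖ = 1/24 := by
    simp [norm_neg, norm_div, Complex.norm_ofNat]
  have hp24 : ‖((1/24):ℂ)‖ = 1/24 := by
    simp [norm_div, Complex.norm_ofNat]
  have hΔaB : ‖(aη η - aη 0)‖ ≤ (7/24) * ‖η‖ := by
    rw [hΔa, norm_mul]
    have h := hbound (-(1/8)) (-(1/8)) (-(1/24))
    rw [ha18, ha24] at h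
    calc ‖η‖ * ‖((-(1/8)) * (1/(2+η)) + (-(1/8)) * (1/(4+η))
          + (-(1/24)) * (1/(6+η)))‖ ≤ ‖η‖ * (7/24) := by
          refine mul_le_mul_of_nonneg_left ?_ (norm_nonneg η); linarith
      _ = (7/24) * ‖η‖ := by ring
  have hΔbB : ‖(bη η - bη 0)‖ ≤ (1/6) * ‖η‖ := by
    rw [hΔb, norm_mul]
    have h := hbound (-(1/8)) 0 (1/24)
    rw [ha18, hp24, norm_zero] at h
    calc ‖η‖ * ‖((-(1/8)) * (1/(2+η)) + (0:ℂ) * (1/(4+η))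
          + (1/24) * (1/(6+η)))‖ ≤ ‖η‖ * (1/6) := by
          refine mul_le_mul_of_nonneg_left ?_ (norm_nonneg η); linarith
      _ = (1/6) * ‖η‖ := by ring
  have hΔcB : ‖(cη η - cη 0)‖ ≤ (7/24) * ‖η‖ := by
    rw [hΔc, norm_mul]
    have h := hbound (-(1/8)) (1/8) (-(1/24))
    rw [ha18, hp18, ha24] at h
    calc ‖η‖ * ‖((-(1/8)) * (1/(2+η)) + (1/8) * (1/(4+η))
          + (-(1/24)) * (1/(6+η)))‖ ≤ ‖η‖ * (7/24) := by
          refine mul_le_mul_of_nonneg_left ?_ (norm_nonneg η); linarith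
      _ = (7/24) * ‖η‖ := by ring
  -- the decomposition of the difference of symbols
  have hId : fη η θ - fη 0 θ
      = ((aη η - aη 0) + (bη η - bη 0) * (x:ℂ) + (bη η - bη 0) * (y:ℂ)
          + (cη η - cη 0) * ((x:ℂ) * (y:ℂ))) * (4 + η - 2*(x:ℂ) - 2*(y:ℂ))
        + (aη 0 + bη 0 * (x:ℂ) + bη 0 * (y:ℂ) + cη 0 * ((x:ℂ) * (y:ℂ))) * η := by
    simp only [fη, ← hxdef, ← hydef]
    ring
  have hxC : ‖((x:ℝ):ℂ)‖ ≤ 1 := by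
    rw [Complex.norm_real, Real.norm_eq_abs, abs_le]; exact ⟨hx, hx1⟩
  have hyC : ‖((y:ℝ):ℂ)‖ ≤ 1 := by
    rw [Complex.norm_real, Real.norm_eq_abs, abs_le]; exact ⟨hy, hy1⟩
  have hxyC : ‖((x:ℂ) * (y:ℂ))‖ ≤ 1 := by
    rw [norm_mul]
    exact mul_le_one₀ hxC (norm_nonneg _) hyC
  -- bound the perturbation term
  have hΔP : ‖((aη η - aη 0) + (bη η - bη 0) * (x:ℂ) + (bη η - bη 0) * (y:ℂ)
      + (cη η - cη 0) * ((x:ℂ) * (y:ℂ)))‖ ≤ (11/12) * ‖η‖ := by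
    have p1 : ‖((bη η - bη 0) * (x:ℂ))‖ ≤ (1/6) * ‖η‖ := by
      rw [norm_mul]
      calc ‖(bη η - bη 0)‖ * ‖((x:ℝ):ℂ)‖
          ≤ ‖(bη η - bη 0)‖ :=
            mul_le_of_le_one_right (norm_nonneg _) hxC
        _ ≤ (1/6) * ‖η‖ := hΔbB
    have p2 : ‖((bη η - bη 0) * (y:ℂ))‖ ≤ (1/6) * ‖η‖ := by
      rw [norm_mul]
      calc ‖(bη η - bη 0)‖ * ‖((y:ℝ):ℂ)‖
          ≤ ‖(bη η - bη 0)‖ :=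
            mul_le_of_le_one_right (norm_nonneg _) hyC
        _ ≤ (1/6) * ‖η‖ := hΔbB
    have p3 : ‖((cη η - cη 0) * ((x:ℂ) * (y:ℂ)))‖ ≤ (7/24) * ‖η‖ := by
      rw [norm_mul]
      calc ‖(cη η - cη 0)‖ * ‖((x:ℂ) * (y:ℂ))‖
          ≤ ‖(cη η - cη 0)‖ :=
            mul_le_of_le_one_right (norm_nonneg _) hxyC
        _ ≤ (7/24) * ‖η‖ := hΔcB
    calc ‖((aη η - aη 0) + (bη η - bη 0) * (x:ℂ) + (bη η - bη 0) * (y:ℂ)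
          + (cη η - cη 0) * ((x:ℂ) * (y:ℂ)))‖
        ≤ ‖(aη η - aη 0)‖ + ‖((bη η - bη 0) * (x:ℂ))‖
          + ‖((bη η - bη 0) * (y:ℂ))‖
          + ‖((cη η - cη 0) * ((x:ℂ) * (y:ℂ)))‖ := habs4 _ _ _ _
      _ ≤ (11/12) * ‖η‖ := by linarith
  have hQ : ‖(4 + η - 2*(x:ℂ) - 2*(y:ℂ))‖ ≤ 9 := by
    have habs2 : ‖(2:ℂ)‖ = 2 := by norm_num [Complex.norm_ofNat]
    have t2 : ‖((2:ℂ)*(x:ℂ))‖ ≤ 2 := by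
      rw [norm_mul, habs2]; linarith
    have t3 : ‖((2:ℂ)*(y:ℂ))‖ ≤ 2 := by
      rw [norm_mul, habs2]; linarith
    have h4' : ‖(4:ℂ)‖ = 4 := by norm_num [Complex.norm_ofNat]
    calc ‖(4 + η - 2*(x:ℂ) - 2*(y:ℂ))‖
        = ‖((4:ℂ) + η + (-(2*(x:ℂ))) + (-(2*(y:ℂ))))‖ := by ring_nf
      _ ≤ ‖(4:ℂ)‖ + ‖η‖ + ‖(-(2*(x:ℂ)))‖
          + ‖(-(2*(y:ℂ)))‖ := habs4 _ _ _ _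
      _ ≤ 9 := by rw [h4', norm_neg, norm_neg]; linarith
  have hP0 : ‖(aη 0 + bη 0 * (x:ℂ) + bη 0 * (y:ℂ) + cη 0 * ((x:ℂ) * (y:ℂ)))‖
      ≤ 1/2 := by
    have e : aη 0 + bη 0 * (x:ℂ) + bη 0 * (y:ℂ) + cη 0 * ((x:ℂ) * (y:ℂ))
        = ((7/24 + x/12 + y/12 + x*y/24 : ℝ) : ℂ) := by
      simp only [aη, bη, cη]; push_cast; ring
    rw [e, Complex.norm_real, Real.norm_eq_abs, abs_le]
    constructor <;> nlinarith [mul_nonneg (by linarith : (0:ℝ) ≤ x+1) (by linarith : (0:ℝ) ≤ y+1),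
      mul_nonneg (by linarith : (0:ℝ) ≤ 1-x) (by linarith : (0:ℝ) ≤ 1-y),
      mul_nonneg (by linarith : (0:ℝ) ≤ x+1) (by linarith : (0:ℝ) ≤ 1-y),
      mul_nonneg (by linarith : (0:ℝ) ≤ 1-x) (by linarith : (0:ℝ) ≤ y+1)]
  have hΔf : ‖(fη η θ - fη 0 θ)‖ ≤ (35/4) * ‖η‖ := by
    rw [hId]
    have q1 : ‖(((aη η - aη 0) + (bη η - bη 0) * (x:ℂ) + (bη η - bη 0) * (y:ℂ)
        + (cη η - cη 0) * ((x:ℂ) * (y:ℂ))) * (4 + η - 2*(x:ℂ) - 2*(y:ℂ)))‖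
        ≤ ((11/12) * ‖η‖) * 9 := by
      rw [norm_mul]
      exact mul_le_mul hΔP hQ (norm_nonneg _) (by positivity)
    have q2 : ‖((aη 0 + bη 0 * (x:ℂ) + bη 0 * (y:ℂ)
        + cη 0 * ((x:ℂ) * (y:ℂ))) * η)‖ ≤ (1/2) * ‖η‖ := by
      rw [norm_mul]
      exact mul_le_mul_of_nonneg_right hP0 (norm_nonneg η)
    calc ‖(((aη η - aη 0) + (bη η - bη 0) * (x:ℂ) + (bη η - bη 0) * (y:ℂ)
          + (cη η - cη 0) * ((x:ℂ) * (y:ℂ))) * (4 + η - 2*(x:ℂ) - 2*(y:ℂ))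
        + (aη 0 + bη 0 * (x:ℂ) + bη 0 * (y:ℂ) + cη 0 * ((x:ℂ) * (y:ℂ))) * η)‖
        ≤ ‖(((aη η - aη 0) + (bη η - bη 0) * (x:ℂ) + (bη η - bη 0) * (y:ℂ)
          + (cη η - cη 0) * ((x:ℂ) * (y:ℂ))) * (4 + η - 2*(x:ℂ) - 2*(y:ℂ)))‖
        + ‖((aη 0 + bη 0 * (x:ℂ) + bη 0 * (y:ℂ)
          + cη 0 * ((x:ℂ) * (y:ℂ))) * η)‖ := norm_add_le _ _
      _ ≤ (35/4) * ‖η‖ := by linarith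
  -- assemble
  have hsplit : (1:ℂ) - (24/25) * fη η θ
      = ((1:ℂ) - (24/25) * fη 0 θ) + (-(24/25)) * (fη η θ - fη 0 θ) := by ring
  have habs2425 : ‖((-(24/25):ℂ))‖ = 24/25 := by
    simp [norm_neg, norm_div, Complex.norm_ofNat]
  calc ‖(1 - (24/25 : ℂ) * fη η θ)‖
      = ‖(((1:ℂ) - (24/25) * fη 0 θ) + (-(24/25)) * (fη η θ - fη 0 θ))‖ := by
        rw [← hsplit]
    _ ≤ ‖((1:ℂ) - (24/25) * fη 0 θ)‖
        + ‖((-(24/25):ℂ))‖ * ‖(fη η θ - fη 0 θ)‖ := by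
        rw [← norm_mul]; exact norm_add_le _ _
    _ ≤ 7/25 + 9 * ‖η‖ := by
        rw [habs2425]; linarith [norm_nonneg η]
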